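/- Let λ ∈ X \ X⁻, so ⟨λ, α^∨⟩ ≥ 0 for some simple root α. Define λ⁰(r) ∈ X_{p^r} and λ¹(r) by λ = λ⁰(r) + p^r λ¹(r), and set λ̂(r) = 2(p^r−1)ρ + w₀λ⁰(r) + p^r λ¹(r). Then: (a) for r large enough, ω = λ¹(r) satisfies ⟨ω, β^∨⟩ ∈ {−1, 0} for all simple β and ⟨ω, α^∨⟩ = 0; (b) with such r fixed, for all s ≥ 0, ⟨λ̂(r+s), α^∨⟩ ≥ p^{r+s} − 1 and ⟨λ̂(r+s), β^∨⟩ ≥ −1 for all other simple roots β; (c) consequently, for any finite set of weights μ₁,…,μ_n, for s sufficiently large λ̂(r+s) is not ≤ μ_i (in dominance order) for any i. -/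

import Mathlib

/-- Let `λ ∈ X \ X⁻`, so `⟨λ, α^∨⟩ ≥ 0` for some simple root
`α = simple jα`.  Write `λ = λ⁰(r) + p^r λ¹(r)` with `λ⁰(r) ∈ X_{p^r}` and set
`λ̂(r) = 2(p^r − 1)ρ + w₀ λ⁰(r) + p^r λ¹(r)`.  Then:
(a) for `r` large enough, `ω = λ¹(r)` satisfies `⟨ω, β^∨⟩ ∈ {−1, 0}` for all
simple `β` and `⟨ω, α^∨⟩ = 0`;
(b) with such `r` fixed, for all `s ≥ 0`, `⟨λ̂(r+s), α^∨⟩ ≥ p^{r+s} − 1` and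
`⟨λ̂(r+s), β^∨⟩ ≥ −1` for all simple `β`;
(c) consequently, for any finite set of weights `μ₁, …, μ_n`, for `s` sufficiently
large `λ̂(r+s)` is not `≤ μ_i` (dominance order) for any `i`.
Here `sco j` are the simple coroot pairings, `coord j` the coordinates in the basis
of simple roots (so `ρ = Σ b_β β` with all `b_β = coord β ρ > 0`), `w₀` the longest
Weyl group element (permuting the negatives of the simple coroots), and dominant
weights have nonnegative coordinates `c_β` satisfying `⟨ν, β^∨⟩ ≤ 2 c_β`. -/
theorem stmt_18 {X : Type*} [AddCommGroup X] {κ : Type*} [Fintype κ] [DecidableEq κ]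
    (simple : κ → X) (sco : κ → X →+ ℤ) (ρ : X) (w0 : X →+ X)
    (coord : κ → X →+ ℚ)
    (p : ℕ) (hp : 2 ≤ p)
    (hρ : ∀ j, sco j ρ = 1)
    (hw0 : ∀ j : κ, ∃ j' : κ, ∀ x : X, sco j (w0 x) = - sco j' x)
    (hcoordsimple : ∀ j j' : κ, coord j (simple j') = if j = j' then 1 else 0)
    (hcoordρ : ∀ j, 0 < coord j ρ)
    (hdompos : ∀ x : X, (∀ j, 0 ≤ sco j x) → ∀ j, 0 ≤ coord j x)
    (hdombound : ∀ x : X, (∀ j, 0 ≤ sco j x) → ∀ j, (sco j x : ℚ) ≤ 2 * coord j x)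
    (lam : X) (jα : κ) (hα : 0 ≤ sco jα lam)
    (lam0 lam1 : ℕ → X)
    (hdecomp : ∀ r : ℕ, lam = lam0 r + ((p : ℤ) ^ r) • lam1 r)
    (hrestr : ∀ (r : ℕ) (j : κ), 0 ≤ sco j (lam0 r) ∧ sco j (lam0 r) < (p : ℤ) ^ r)
    (lamhat : ℕ → X)
    (hlamhat : ∀ r : ℕ,
      lamhat r = (2 * ((p : ℤ) ^ r - 1)) • ρ + w0 (lam0 r) + ((p : ℤ) ^ r) • lam1 r) :
    ∃ r₀ : ℕ, ∀ r ≥ r₀,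
      ((∀ j : κ, sco j (lam1 r) = -1 ∨ sco j (lam1 r) = 0) ∧ sco jα (lam1 r) = 0) ∧
      (∀ s : ℕ, ((p : ℤ) ^ (r + s) - 1 ≤ sco jα (lamhat (r + s))) ∧
        ∀ j : κ, -1 ≤ sco j (lamhat (r + s))) ∧
      (∀ (n : ℕ) (μ : Fin n → X), ∃ s₀ : ℕ, ∀ s ≥ s₀, ∀ i : Fin n,
        ¬ ∃ c : κ → ℕ, μ i - lamhat (r + s) = ∑ j, (c j : ℤ) • simple j) := by
    classical
  set N : ℕ := Finset.univ.sup fun j => (sco j lam).natAbs with hN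
  have habs : ∀ j, |sco j lam| ≤ (N : ℤ) := by
    intro j
    rw [Int.abs_eq_natAbs]
    exact_mod_cast Finset.le_sup (f := fun j => (sco j lam).natAbs) (Finset.mem_univ j)
  have hp2 : (0:ℤ) < (p:ℤ) := by exact_mod_cast Nat.lt_of_lt_of_le Nat.zero_lt_two hp
  have hPpos : ∀ r : ℕ, 0 < (p:ℤ)^r := fun r => pow_pos hp2 r
  have hPbig : ∀ r : ℕ, N ≤ r → (N : ℤ) < (p : ℤ) ^ r := by
    intro r hr
    have h1 : N < 2 ^ r := lt_of_le_of_lt hr (Nat.lt_two_pow_self (n := r))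
    have h2 : 2 ^ r ≤ p ^ r := Nat.pow_le_pow_left hp r
    exact_mod_cast lt_of_lt_of_le h1 h2
  have hsco : ∀ (r : ℕ) (j : κ),
      sco j lam = sco j (lam0 r) + (p:ℤ)^r * sco j (lam1 r) := by
    intro r j
    have := congrArg (sco j) (hdecomp r)
    simpa [map_add, map_zsmul, smul_eq_mul] using this
  have key : ∀ r, N ≤ r →
      (∀ j, sco j (lam1 r) = -1 ∨ sco j (lam1 r) = 0) ∧ sco jα (lam1 r) = 0 := by
    intro r hr
    have hP := hPpos r
    have hNP := hPbig r hr
    have main : ∀ j, sco j (lam1 r) = -1 ∨ sco j (lam1 r) = 0 := by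
      intro j
      have h := hsco r j
      have hb := hrestr r j
      have ha := abs_le.mp (habs j)
      have h1 : sco j (lam1 r) < 1 := by
        have hlt : (p:ℤ)^r * sco j (lam1 r) < (p:ℤ)^r * 1 := by
          rw [mul_one]; linarith [ha.2, hb.1]
        exact lt_of_mul_lt_mul_left hlt hP.le
      have h2 : (-2 : ℤ) < sco j (lam1 r) := by
        have hlt : (p:ℤ)^r * (-2 : ℤ) < (p:ℤ)^r * sco j (lam1 r) := by
          have he : (p:ℤ)^r * (-2 : ℤ) = -((p:ℤ)^r) - (p:ℤ)^r := by ring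
          rw [he]; linarith [ha.1, hb.2]
        exact lt_of_mul_lt_mul_left hlt hP.le
      omega
    refine ⟨main, ?_⟩
    have h := hsco r jα
    have hb := hrestr r jα
    have h3 : (-1 : ℤ) < sco jα (lam1 r) := by
      have hlt : (p:ℤ)^r * (-1 : ℤ) < (p:ℤ)^r * sco jα (lam1 r) := by
        have he : (p:ℤ)^r * (-1 : ℤ) = -((p:ℤ)^r) := by ring
        rw [he]; linarith [hb.2, hα]
      exact lt_of_mul_lt_mul_left hlt (hPpos r).le
    rcases main jα with h4 | h4 <;> omega
  -- formula for sco j (lamhat t)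
  have hval : ∀ (t : ℕ) (j : κ), ∃ b' : ℤ, 0 ≤ b' ∧ b' < (p:ℤ)^t ∧
      sco j (lamhat t) = 2*((p:ℤ)^t - 1) - b' + (p:ℤ)^t * sco j (lam1 t) := by
    intro t j
    obtain ⟨j', hj'⟩ := hw0 j
    refine ⟨sco j' (lam0 t), (hrestr t j').1, (hrestr t j').2, ?_⟩
    have h0 : sco j (lamhat t) = (2*((p:ℤ)^t - 1)) * sco j ρ
        + sco j (w0 (lam0 t)) + (p:ℤ)^t * sco j (lam1 t) := by
      rw [hlamhat t]
      simp [map_add, map_zsmul, smul_eq_mul]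
    rw [h0, hρ j, hj' (lam0 t)]; ring
  -- part (b) bounds, for any t ≥ N
  have hb1 : ∀ t : ℕ, N ≤ t → (p:ℤ)^t - 1 ≤ sco jα (lamhat t) := by
    intro t ht
    obtain ⟨b', hb0, hbP, he⟩ := hval t jα
    have hc := (key t ht).2
    rw [he, hc]; have := hPpos t; linarith
  have hb2 : ∀ t : ℕ, N ≤ t → ∀ j, -1 ≤ sco j (lamhat t) := by
    intro t ht j
    obtain ⟨b', hb0, hbP, he⟩ := hval t j
    have hP := hPpos t
    rcases (key t ht).1 j with hc | hc <;> rw [he, hc] <;> linarith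
  refine ⟨N, fun r hr => ⟨key r hr, ?_, ?_⟩⟩
  · intro s
    have ht : N ≤ r + s := le_trans hr (Nat.le_add_right r s)
    exact ⟨hb1 _ ht, hb2 _ ht⟩
  · intro n μ
    set B : ℚ := ∑ i, |coord jα (μ i)| with hB
    have hBi : ∀ i, coord jα (μ i) ≤ B := by
      intro i
      calc coord jα (μ i) ≤ |coord jα (μ i)| := le_abs_self _
        _ ≤ B := Finset.single_le_sum (f := fun i => |coord jα (μ i)|) (fun i _ => abs_nonneg _) (Finset.mem_univ i)
    obtain ⟨s₀, hs₀⟩ := exists_nat_gt (2*B + 4 * coord jα ρ)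
    refine ⟨s₀, fun s hs i => ?_⟩
    rintro ⟨c, hc⟩
    set t := r + s with htdef
    have ht : N ≤ t := le_trans hr (Nat.le_add_right r s)
    -- upper bound on coord jα (lamhat t)
    have hup : coord jα (lamhat t) ≤ B := by
      have h1 := congrArg (coord jα) hc
      have h2 : coord jα (∑ j, (c j : ℤ) • simple j) = (c jα : ℚ) := by
        rw [map_sum]
        have : ∀ j ∈ Finset.univ, coord jα ((c j : ℤ) • simple j)
            = if jα = j then (c j : ℚ) else 0 := by
          intro j _
          rw [map_zsmul, hcoordsimple jα j]
          split <;> simp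
        rw [Finset.sum_congr rfl this, Finset.sum_ite_eq]
        simp
      rw [map_sub, h2] at h1
      have hcn : (0:ℚ) ≤ (c jα : ℚ) := by positivity
      have := hBi i
      linarith
    -- lower bound
    have hdom : ∀ j, 0 ≤ sco j (lamhat t + (2:ℤ) • ρ) := by
      intro j
      rw [map_add, map_zsmul, hρ j]
      have := hb2 t ht j
      simp only [smul_eq_mul]
      linarith
    have hbd := hdombound _ hdom jα
    have hsy : ((p:ℤ)^t + 1 : ℤ) ≤ sco jα (lamhat t + (2:ℤ) • ρ) := by
      rw [map_add, map_zsmul, hρ jα]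
      have := hb1 t ht
      simp only [smul_eq_mul]
      linarith
    have hcy : coord jα (lamhat t + (2:ℤ) • ρ)
        = coord jα (lamhat t) + 2 * coord jα ρ := by
      rw [map_add, map_zsmul]
      simp only [zsmul_eq_mul]
      push_cast
      ring
    have hsyq : ((p:ℚ)^t + 1) ≤ (sco jα (lamhat t + (2:ℤ) • ρ) : ℚ) := by
      exact_mod_cast hsy
    have hpt : (s:ℚ) < (p:ℚ)^t := by
      have h1 : s < 2 ^ s := Nat.lt_two_pow_self (n := s)
      have h2 : (2:ℕ) ^ s ≤ 2 ^ t := Nat.pow_le_pow_right (by norm_num) (Nat.le_add_left s r)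
      have h3 : (2:ℕ) ^ t ≤ p ^ t := Nat.pow_le_pow_left hp t
      exact_mod_cast lt_of_lt_of_le h1 (le_trans h2 h3)
    have hsq : (s₀:ℚ) ≤ (s:ℚ) := by exact_mod_cast hs
    rw [hcy] at hbd
    linarith
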